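/- Let m ≥ 1, let M, N ⊆ [m] with |M|+|N| ≥ 1, and let D = aΔ_M + cΔ_N ⊆ E^m. Then the linear right-E-code C^R_D has length |D| = 2^{|M|+|N|} and size |C^R_D| = 2^{|M∪N|}, and the multiset {wt_Lee(c^R_D(v)) : v ∈ E^m} (with multiplicity over all 2^{2m} elements v ∈ E^m) consists of: 2^{|M|+|N|} with multiplicity 2^m(2^m−2^{m−|N|}); 2^{|M|+|N|−1} with multiplicity 2^m(2^{m−|N|}−2^{m−|M∪N|}); and 0 with multiplicity 2^{2m−|M∪N|}. -/

import Mathlib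

open Finset

/-- The simplicial complex `Δ_M ⊆ 𝔽₂^m` generated by `M ⊆ [m]`:
all vectors whose support is contained in `M`. -/
def deltaC {m : ℕ} (M : Finset (Fin m)) : Finset (Fin m → ZMod 2) :=
  Finset.univ.filter (fun w => ∀ i, w i ≠ 0 → i ∈ M)

/-- Dot product over `𝔽₂`. -/
def dotp {m : ℕ} (x y : Fin m → ZMod 2) : ZMod 2 := ∑ i, x i * y i

/-- The Gray map on a single element `a·s + c·t ↔ (s, t)` of `E = 𝔽₂ × 𝔽₂`:
`Φ(as + ct) = (t, s + t)`. -/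
def grayPair (e : ZMod 2 × ZMod 2) : Fin 2 → ZMod 2 := ![e.2, e.1 + e.2]

/-- The left codeword `c^L_D(v)` for `v = aα + cβ ↔ (α, β)`:
its coordinate at `d = (t₁, t₂) ∈ D` is `a(α·t₁) + c(β·t₁) ↔ (α·t₁, β·t₁)`. -/
def cwL {m : ℕ} (Ds : Finset ((Fin m → ZMod 2) × (Fin m → ZMod 2)))
    (v : (Fin m → ZMod 2) × (Fin m → ZMod 2)) :
    {d // d ∈ Ds} → ZMod 2 × ZMod 2 :=
  fun d => (dotp v.1 d.1.1, dotp v.2 d.1.1)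

/-- The Gray image `Φ(c^L_D(v)) ∈ 𝔽₂^{2|D|}` of the left codeword `c^L_D(v)`;
its Hamming weight (`hammingNorm`) is the Lee weight of `c^L_D(v)`. -/
def gcwL {m : ℕ} (Ds : Finset ((Fin m → ZMod 2) × (Fin m → ZMod 2)))
    (v : (Fin m → ZMod 2) × (Fin m → ZMod 2)) :
    {d // d ∈ Ds} × Fin 2 → ZMod 2 :=
  fun x => grayPair (cwL Ds v x.1) x.2

/-- The right codeword `c^R_D(v)` for `v = aα + cβ ↔ (α, β)`:
its coordinate at `d = (t₁, t₂) ∈ D` is `a(t₁·α) + c(t₂·α) ↔ (t₁·α, t₂·α)`. -/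
def cwR {m : ℕ} (Ds : Finset ((Fin m → ZMod 2) × (Fin m → ZMod 2)))
    (v : (Fin m → ZMod 2) × (Fin m → ZMod 2)) :
    {d // d ∈ Ds} → ZMod 2 × ZMod 2 :=
  fun d => (dotp d.1.1 v.1, dotp d.1.2 v.1)

/-- The Gray image `Φ(c^R_D(v)) ∈ 𝔽₂^{2|D|}` of the right codeword `c^R_D(v)`;
its Hamming weight (`hammingNorm`) is the Lee weight of `c^R_D(v)`. -/
def gcwR {m : ℕ} (Ds : Finset ((Fin m → ZMod 2) × (Fin m → ZMod 2)))
    (v : (Fin m → ZMod 2) × (Fin m → ZMod 2)) :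
    {d // d ∈ Ds} × Fin 2 → ZMod 2 :=
  fun x => grayPair (cwR Ds v x.1) x.2


lemma deltaC_eq {m : ℕ} (M : Finset (Fin m)) :
    deltaC M = Fintype.piFinset (fun i => if i ∈ M then (univ : Finset (ZMod 2)) else {0}) := by
  ext w
  simp only [deltaC, mem_filter, mem_univ, true_and, Fintype.mem_piFinset]
  constructor
  · intro h i
    split_ifs with hi
    · simp
    · simpa using fun hw => hi (h i hw)
  · intro h i hw
    by_contra hi
    have := h i
    rw [if_neg hi] at this
    simp at this
    exact hw this

lemma card_deltaC {m : ℕ} (M : Finset (Fin m)) : (deltaC M).card = 2 ^ M.card := by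
  rw [deltaC_eq, Fintype.card_piFinset]
  have : ∀ i, (if i ∈ M then (univ : Finset (ZMod 2)) else {0}).card = if i ∈ M then 2 else 1 := by
    intro i; split_ifs <;> simp
  simp_rw [this]
  rw [Finset.prod_ite_mem, Finset.univ_inter, Finset.prod_const]

lemma dotp_single {m : ℕ} (i : Fin m) (α : Fin m → ZMod 2) :
    dotp (fun j => if j = i then 1 else 0) α = α i := by
  simp [dotp, ite_mul, Finset.sum_ite_eq']

lemma dotp_add_left {m : ℕ} (x y α : Fin m → ZMod 2) :
    dotp (x + y) α = dotp x α + dotp y α := by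
  simp [dotp, add_mul, Finset.sum_add_distrib]

lemma single_mem_deltaC {m : ℕ} {M : Finset (Fin m)} {i : Fin m} (hi : i ∈ M) :
    (fun j => if j = i then 1 else 0) ∈ deltaC M := by
  simp only [deltaC, mem_filter, mem_univ, true_and]
  intro j hj
  by_cases h : j = i
  · exact h ▸ hi
  · simp [h] at hj

lemma zero_mem_deltaC {m : ℕ} (M : Finset (Fin m)) : (0 : Fin m → ZMod 2) ∈ deltaC M := by
  simp [deltaC]

lemma zmod2_ne_zero_iff : ∀ x : ZMod 2, x ≠ 0 ↔ x = 1 := by decide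

lemma zmod2_two : ∀ x : ZMod 2, x + 1 + 1 = x := by decide

lemma zmod2_ne_iff : ∀ x z : ZMod 2, ¬z = x ↔ z = x + 1 := by decide

lemma half_card {m : ℕ} (M : Finset (Fin m)) (α : Fin m → ZMod 2)
    (h : ∃ i ∈ M, α i ≠ 0) (x : ZMod 2) :
    ((deltaC M).filter (fun t => dotp t α = x)).card = 2 ^ (M.card - 1) := by
  classical
  obtain ⟨i, hiM, hαi⟩ := h
  have hαi1 : α i = 1 := (zmod2_ne_zero_iff _).1 hαi
  set e : Fin m → ZMod 2 := fun j => if j = i then 1 else 0 with he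
  have hee : ∀ t : Fin m → ZMod 2, t + e + e = t := by
    intro t; funext j; by_cases hji : j = i <;> simp [he, hji] <;> exact zmod2_two _ ▸ by
      simpa using congrArg (fun z => z) (zmod2_two (t j))
  have key : ∀ y : ZMod 2, ((deltaC M).filter (fun t => dotp t α = y)).card =
      ((deltaC M).filter (fun t => dotp t α = y + 1)).card := by
    intro y
    apply Finset.card_bij' (fun t _ => t + e) (fun t _ => t + e)
    · intro t ht
      simp only [mem_filter] at ht ⊢
      refine ⟨?_, by rw [dotp_add_left, ht.2, dotp_single, hαi1]⟩
      simp only [deltaC, mem_filter, mem_univ, true_and] at ht ⊢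
      intro j hj
      by_cases hji : j = i
      · exact hji ▸ hiM
      · apply ht.1 j; simpa [he, hji] using hj
    · intro t ht
      simp only [mem_filter] at ht ⊢
      refine ⟨?_, by rw [dotp_add_left, ht.2, dotp_single, hαi1, zmod2_two]⟩
      simp only [deltaC, mem_filter, mem_univ, true_and] at ht ⊢
      intro j hj
      by_cases hji : j = i
      · exact hji ▸ hiM
      · apply ht.1 j; simpa [he, hji] using hj
    · intro t _; exact hee t
    · intro t _; exact hee t
  have hsplit : ((deltaC M).filter (fun t => dotp t α = x)).card
      + ((deltaC M).filter (fun t => ¬ dotp t α = x)).card = (deltaC M).card :=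
    Finset.card_filter_add_card_filter_not _
  have hne : ((deltaC M).filter (fun t => ¬ dotp t α = x)).card
      = ((deltaC M).filter (fun t => dotp t α = x + 1)).card := by
    congr 1
    apply Finset.filter_congr
    intro t _
    exact zmod2_ne_iff x (dotp t α)
  have hM1 : 1 ≤ M.card := Finset.card_pos.2 ⟨i, hiM⟩
  have h2 : 2 * ((deltaC M).filter (fun t => dotp t α = x)).card = 2 ^ M.card := by
    rw [← card_deltaC M, ← hsplit, hne, ← key x, two_mul]
  have : 2 ^ M.card = 2 * 2 ^ (M.card - 1) := by
    rw [← pow_succ']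
    congr 1
    omega
  omega

lemma dotp_eq_zero {m : ℕ} {M : Finset (Fin m)} {α : Fin m → ZMod 2}
    (h : ¬ ∃ i ∈ M, α i ≠ 0) {t : Fin m → ZMod 2} (ht : t ∈ deltaC M) :
    dotp t α = 0 := by
  push_neg at h
  simp only [deltaC, mem_filter, mem_univ, true_and] at ht
  apply Finset.sum_eq_zero
  intro i _
  by_cases hti : t i = 0
  · rw [hti, zero_mul]
  · rw [h i (ht i hti), mul_zero]

lemma filter_forall_card {m : ℕ} (S : Finset (Fin m)) :
    ((univ : Finset (Fin m → ZMod 2)).filter (fun α => ¬ ∃ i ∈ S, α i ≠ 0)).card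
      = 2 ^ (m - S.card) := by
  classical
  have : ((univ : Finset (Fin m → ZMod 2)).filter (fun α => ¬ ∃ i ∈ S, α i ≠ 0)) = deltaC Sᶜ := by
    ext w
    simp only [mem_filter, mem_univ, true_and, deltaC, mem_compl]
    push_neg
    constructor
    · intro h i hw
      by_contra hi
      exact hw (h i (by simpa using hi))
    · intro h i hi
      by_contra hw
      exact (h i hw) hi
  rw [this, card_deltaC]
  congr 1
  rw [Finset.card_compl, Fintype.card_fin]

lemma zmod2_add_ne_iff : ∀ x z : ZMod 2, x + z ≠ 0 ↔ z = x + 1 := by decide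

lemma weight_formula {m : ℕ} (M N : Finset (Fin m))
    (v : (Fin m → ZMod 2) × (Fin m → ZMod 2)) :
    hammingNorm (gcwR (deltaC M ×ˢ deltaC N) v) =
      if ∃ i ∈ N, v.1 i ≠ 0 then 2 ^ (M.card + N.card)
      else if ∃ i ∈ M, v.1 i ≠ 0 then 2 ^ (M.card + N.card - 1) else 0 := by
  classical
  set α := v.1 with hα
  set Ds := deltaC M ×ˢ deltaC N with hDs
  have h1 : hammingNorm (gcwR Ds v)
      = ∑ x : {d // d ∈ Ds} × Fin 2, (if gcwR Ds v x ≠ 0 then 1 else 0) := by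
    simp [hammingNorm, Finset.card_filter]
  rw [h1, Fintype.sum_prod_type]
  have h2 : ∀ d : {d // d ∈ Ds},
      (∑ j : Fin 2, if gcwR Ds v (d, j) ≠ 0 then 1 else 0)
      = ((if dotp d.1.2 α ≠ 0 then 1 else 0)
        + if dotp d.1.1 α + dotp d.1.2 α ≠ 0 then 1 else 0 : ℕ) := by
    intro d
    rw [Fin.sum_univ_two]
    simp [gcwR, grayPair, cwR]
    split_ifs <;> simp_all
  simp_rw [h2]
  rw [Finset.sum_coe_sort Ds
    (fun d => ((if dotp d.2 α ≠ 0 then 1 else 0)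
        + if dotp d.1 α + dotp d.2 α ≠ 0 then 1 else 0 : ℕ))]
  rw [hDs, Finset.sum_product]
  by_cases hq : ∃ i ∈ N, α i ≠ 0
  · rw [if_pos hq]
    obtain ⟨i0, hi0, _⟩ := id hq
    have hB : 1 ≤ N.card := Finset.card_pos.2 ⟨i0, hi0⟩
    have inner : ∀ t₁ ∈ deltaC M,
        (∑ t₂ ∈ deltaC N, ((if dotp t₂ α ≠ 0 then 1 else 0)
          + if dotp t₁ α + dotp t₂ α ≠ 0 then 1 else 0 : ℕ))
        = 2 ^ (N.card - 1) + 2 ^ (N.card - 1) := by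
      intro t₁ _
      rw [Finset.sum_add_distrib]
      congr 1
      · rw [← Finset.card_filter]
        rw [show ((deltaC N).filter (fun t₂ => dotp t₂ α ≠ 0))
            = ((deltaC N).filter (fun t₂ => dotp t₂ α = 1)) from
          Finset.filter_congr (fun t _ => by simpa using zmod2_ne_zero_iff (dotp t α))]
        exact half_card N α hq 1
      · rw [← Finset.card_filter]
        rw [show ((deltaC N).filter (fun t₂ => dotp t₁ α + dotp t₂ α ≠ 0))
            = ((deltaC N).filter (fun t₂ => dotp t₂ α = dotp t₁ α + 1)) from
          Finset.filter_congr (fun t _ => by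
            simpa using zmod2_add_ne_iff (dotp t₁ α) (dotp t α))]
        exact half_card N α hq _
    rw [Finset.sum_congr rfl inner, Finset.sum_const, card_deltaC, smul_eq_mul]
    have h3 : 2 ^ (N.card - 1) + 2 ^ (N.card - 1) = 2 ^ N.card := by
      rw [← two_mul, ← pow_succ']
      congr 1
      omega
    rw [h3, ← pow_add]
  · rw [if_neg hq]
    have hz : ∀ t₂ ∈ deltaC N, dotp t₂ α = 0 := fun t₂ h => dotp_eq_zero hq h
    have inner : ∀ t₁ ∈ deltaC M,
        (∑ t₂ ∈ deltaC N, ((if dotp t₂ α ≠ 0 then 1 else 0)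
          + if dotp t₁ α + dotp t₂ α ≠ 0 then 1 else 0 : ℕ))
        = 2 ^ N.card * (if dotp t₁ α ≠ 0 then 1 else 0) := by
      intro t₁ _
      rw [Finset.sum_congr rfl (fun t₂ ht₂ => by
        rw [hz t₂ ht₂, add_zero, if_neg (by simp)])]
      rw [Finset.sum_const, card_deltaC, smul_eq_mul, zero_add]
    rw [Finset.sum_congr rfl inner, ← Finset.mul_sum, ← Finset.card_filter]
    by_cases hp : ∃ i ∈ M, α i ≠ 0
    · rw [if_pos hp]
      obtain ⟨i0, hi0, _⟩ := id hp
      have hA : 1 ≤ M.card := Finset.card_pos.2 ⟨i0, hi0⟩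
      rw [show ((deltaC M).filter (fun t => dotp t α ≠ 0))
          = ((deltaC M).filter (fun t => dotp t α = 1)) from
        Finset.filter_congr (fun t _ => by simpa using zmod2_ne_zero_iff (dotp t α))]
      rw [half_card M α hp 1, ← pow_add]
      congr 1
      omega
    · rw [if_neg hp]
      have : ((deltaC M).filter (fun t => dotp t α ≠ 0)) = ∅ := by
        apply Finset.filter_eq_empty_iff.2
        intro t ht
        simp [dotp_eq_zero hp ht]
      rw [this]
      simp

lemma card_image_pair {α β γ : Type*} [DecidableEq β] [DecidableEq γ] (s : Finset α)
    (f : α → β) (g : α → γ) (h : ∀ a ∈ s, ∀ b ∈ s, f a = f b ↔ g a = g b) :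
    (s.image f).card = (s.image g).card := by
  classical
  have h1 : s.image f = (s.image fun a => (f a, g a)).image Prod.fst := by
    rw [Finset.image_image]; rfl
  have h2 : s.image g = (s.image fun a => (f a, g a)).image Prod.snd := by
    rw [Finset.image_image]; rfl
  have hc1 : ((s.image fun a => (f a, g a)).image Prod.fst).card
      = (s.image fun a => (f a, g a)).card := by
    apply Finset.card_image_of_injOn
    intro x hx y hy hxy
    simp only [Finset.coe_image, Set.mem_image, Finset.mem_coe] at hx hy
    obtain ⟨a, ha, rfl⟩ := hx
    obtain ⟨b, hb, rfl⟩ := hy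
    have : g a = g b := (h a ha b hb).1 hxy
    simp_all
  have hc2 : ((s.image fun a => (f a, g a)).image Prod.snd).card
      = (s.image fun a => (f a, g a)).card := by
    apply Finset.card_image_of_injOn
    intro x hx y hy hxy
    simp only [Finset.coe_image, Set.mem_image, Finset.mem_coe] at hx hy
    obtain ⟨a, ha, rfl⟩ := hx
    obtain ⟨b, hb, rfl⟩ := hy
    have : f a = f b := (h a ha b hb).2 hxy
    simp_all
  rw [h1, h2, hc1, hc2]

lemma image_card {m : ℕ} (M N : Finset (Fin m)) :
    ((Finset.univ : Finset ((Fin m → ZMod 2) × (Fin m → ZMod 2))).image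
      (cwR (deltaC M ×ˢ deltaC N))).card = 2 ^ (M ∪ N).card := by
  classical
  set Ds := deltaC M ×ˢ deltaC N with hDs
  set g : ((Fin m → ZMod 2) × (Fin m → ZMod 2)) → ({i // i ∈ M ∪ N} → ZMod 2) :=
    fun v => fun i => v.1 i.1 with hg
  have key : ∀ v ∈ (Finset.univ : Finset ((Fin m → ZMod 2) × (Fin m → ZMod 2))),
      ∀ w ∈ (Finset.univ : Finset ((Fin m → ZMod 2) × (Fin m → ZMod 2))),
      (cwR Ds v = cwR Ds w ↔ g v = g w) := by
    intro v _ w _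
    constructor
    · intro hcw
      funext i
      obtain ⟨i, hi⟩ := i
      rcases Finset.mem_union.1 hi with hiM | hiN
      · have hd : ((fun j => if j = i then 1 else 0), (0 : Fin m → ZMod 2)) ∈ Ds :=
          Finset.mem_product.2 ⟨single_mem_deltaC hiM, zero_mem_deltaC N⟩
        have := congrFun hcw ⟨_, hd⟩
        simpa [cwR, dotp_single, hg] using congrArg Prod.fst this
      · have hd : ((0 : Fin m → ZMod 2), (fun j => if j = i then 1 else 0)) ∈ Ds :=
          Finset.mem_product.2 ⟨zero_mem_deltaC M, single_mem_deltaC hiN⟩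
        have := congrFun hcw ⟨_, hd⟩
        simpa [cwR, dotp_single, hg] using congrArg Prod.snd this
    · intro hgv
      have hagree : ∀ i ∈ M ∪ N, v.1 i = w.1 i := by
        intro i hi
        exact congrFun hgv ⟨i, hi⟩
      funext d
      obtain ⟨⟨t₁, t₂⟩, hd⟩ := d
      obtain ⟨ht₁, ht₂⟩ := Finset.mem_product.1 hd
      simp only [deltaC, mem_filter, mem_univ, true_and] at ht₁ ht₂
      have hdot : ∀ (t : Fin m → ZMod 2), (∀ j, t j ≠ 0 → j ∈ M ∪ N) →
          dotp t v.1 = dotp t w.1 := by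
        intro t ht
        apply Finset.sum_congr rfl
        intro j _
        by_cases hj : t j = 0
        · rw [hj, zero_mul, zero_mul]
        · rw [hagree j (ht j hj)]
      simp only [cwR]
      rw [hdot t₁ (fun j hj => Finset.mem_union.2 (Or.inl (ht₁ j hj))),
        hdot t₂ (fun j hj => Finset.mem_union.2 (Or.inr (ht₂ j hj)))]
  rw [card_image_pair _ _ g key]
  have hsurj : (Finset.univ : Finset ((Fin m → ZMod 2) × (Fin m → ZMod 2))).image g
      = Finset.univ := by
    apply Finset.eq_univ_of_forall
    intro h
    apply Finset.mem_image.2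
    refine ⟨⟨fun i => if hi : i ∈ M ∪ N then h ⟨i, hi⟩ else 0, 0⟩, Finset.mem_univ _, ?_⟩
    funext i
    simp only [hg]
    rw [dif_pos i.2]
  rw [hsurj, Finset.card_univ, Fintype.card_fun, Fintype.card_coe, ZMod.card]

section main
variable {m : ℕ}

abbrev V (m : ℕ) := Fin m → ZMod 2

lemma card_fun2 : Fintype.card (Fin m → ZMod 2) = 2 ^ m := by
  rw [Fintype.card_fun, ZMod.card, Fintype.card_fin]

lemma filter_fst_card (p : V m → Prop) [DecidablePred p]
    [DecidablePred (fun v : V m × V m => p v.1)] :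
    ((univ : Finset (V m × V m)).filter (fun v => p v.1)).card
      = ((univ : Finset (V m)).filter p).card * 2 ^ m := by
  have h : ((univ : Finset (V m × V m)).filter (fun v => p v.1))
      = ((univ : Finset (V m)).filter p) ×ˢ (univ : Finset (V m)) := by
    ext v
    simp [Finset.mem_product]
  rw [h, Finset.card_product, Finset.card_univ, card_fun2]

end main


theorem stmt_10 {m : ℕ} (hm : 1 ≤ m) (M N : Finset (Fin m))
    (hMN : 1 ≤ M.card + N.card)
    (Ds : Finset ((Fin m → ZMod 2) × (Fin m → ZMod 2)))
    (hDs : Ds = deltaC M ×ˢ deltaC N) :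
    Ds.card = 2 ^ (M.card + N.card) ∧
    ((Finset.univ : Finset ((Fin m → ZMod 2) × (Fin m → ZMod 2))).image (cwR Ds)).card = 2 ^ (M ∪ N).card ∧
    (Finset.univ : Finset ((Fin m → ZMod 2) × (Fin m → ZMod 2))).val.map (fun v => hammingNorm (gcwR Ds v)) =
      Multiset.replicate (2 ^ m * (2 ^ m - 2 ^ (m - N.card)))
          (2 ^ (M.card + N.card)) +
      Multiset.replicate (2 ^ m * (2 ^ (m - N.card) - 2 ^ (m - (M ∪ N).card)))
          (2 ^ (M.card + N.card - 1)) +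
      Multiset.replicate (2 ^ (2 * m - (M ∪ N).card))
          (0) := by
  classical
  subst hDs
  refine ⟨?_, image_card M N, ?_⟩
  · rw [Finset.card_product, card_deltaC, card_deltaC, ← pow_add]
  -- multiset part
  have hW : ∀ v : V m × V m, hammingNorm (gcwR (deltaC M ×ˢ deltaC N) v)
      = if ∃ i ∈ N, v.1 i ≠ 0 then 2 ^ (M.card + N.card)
        else if ∃ i ∈ M, v.1 i ≠ 0 then 2 ^ (M.card + N.card - 1) else 0 :=
    fun v => weight_formula M N v
  have hu : (M ∪ N).card ≤ m := by
    calc (M ∪ N).card ≤ Fintype.card (Fin m) := Finset.card_le_univ _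
    _ = m := Fintype.card_fin m
  set s := (univ : Finset (V m × V m)).val with hs
  have hdec : s = s.filter (fun v => ∃ i ∈ N, v.1 i ≠ 0)
      + ((s.filter (fun v => ¬ ∃ i ∈ N, v.1 i ≠ 0)).filter (fun v => ∃ i ∈ M, v.1 i ≠ 0)
      + (s.filter (fun v => ¬ ∃ i ∈ N, v.1 i ≠ 0)).filter (fun v => ¬ ∃ i ∈ M, v.1 i ≠ 0)) := by
    rw [Multiset.filter_add_not (fun v => ∃ i ∈ M, v.1 i ≠ 0)
        (s.filter (fun v => ¬ ∃ i ∈ N, v.1 i ≠ 0)),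
      Multiset.filter_add_not (fun v => ∃ i ∈ N, v.1 i ≠ 0) s]
  have mcard : ∀ (p : V m × V m → Prop) (_ : DecidablePred p),
      Multiset.card (s.filter p) = ((univ : Finset (V m × V m)).filter p).card := by
    intro p hp
    rw [← Finset.filter_val]
    rfl
  have hcard1 : Multiset.card (s.filter (fun v => ∃ i ∈ N, v.1 i ≠ 0))
      = 2 ^ m * (2 ^ m - 2 ^ (m - N.card)) := by
    rw [mcard _ inferInstance, filter_fst_card (fun α => ∃ i ∈ N, α i ≠ 0)]
    have hsum := Finset.card_filter_add_card_filter_not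
      (s := (univ : Finset (V m))) (p := fun α => ∃ i ∈ N, α i ≠ 0)
    rw [Finset.card_univ, card_fun2] at hsum
    have h2 := filter_forall_card N
    rw [mul_comm]
    congr 1
    rw [h2] at hsum
    exact Nat.eq_sub_of_add_eq hsum
  have hcard2 : Multiset.card ((s.filter (fun v => ¬ ∃ i ∈ N, v.1 i ≠ 0)).filter
      (fun v => ∃ i ∈ M, v.1 i ≠ 0))
      = 2 ^ m * (2 ^ (m - N.card) - 2 ^ (m - (M ∪ N).card)) := by
    rw [Multiset.filter_filter, mcard _ inferInstance,
      filter_fst_card (fun α => (∃ i ∈ M, α i ≠ 0) ∧ ¬ ∃ i ∈ N, α i ≠ 0)]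
    have hsum := Finset.card_filter_add_card_filter_not
      (s := (univ : Finset (V m)).filter (fun α => ¬ ∃ i ∈ N, α i ≠ 0))
      (p := fun α => ∃ i ∈ M, α i ≠ 0)
    rw [Finset.filter_filter, Finset.filter_filter, filter_forall_card N] at hsum
    have heq : ((univ : Finset (V m)).filter
        (fun α => (¬ ∃ i ∈ N, α i ≠ 0) ∧ ¬ ∃ i ∈ M, α i ≠ 0))
        = ((univ : Finset (V m)).filter (fun α => ¬ ∃ i ∈ M ∪ N, α i ≠ 0)) := by
      apply Finset.filter_congr
      intro α _
      constructor
      · rintro ⟨hN, hM⟩ ⟨i, hi, hα⟩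
        rcases Finset.mem_union.1 hi with h | h
        · exact hM ⟨i, h, hα⟩
        · exact hN ⟨i, h, hα⟩
      · intro h
        exact ⟨fun ⟨i, hi, hα⟩ => h ⟨i, Finset.mem_union.2 (Or.inr hi), hα⟩,
          fun ⟨i, hi, hα⟩ => h ⟨i, Finset.mem_union.2 (Or.inl hi), hα⟩⟩
    rw [heq, filter_forall_card (M ∪ N)] at hsum
    rw [mul_comm]
    congr 1
    have hswap : ((univ : Finset (V m)).filter
        (fun α => (¬ ∃ i ∈ N, α i ≠ 0) ∧ ∃ i ∈ M, α i ≠ 0)).card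
        = ((univ : Finset (V m)).filter
        (fun α => (∃ i ∈ M, α i ≠ 0) ∧ ¬ ∃ i ∈ N, α i ≠ 0)).card := by
      congr 1
      apply Finset.filter_congr
      intro α _
      tauto
    rw [← hswap]
    exact Nat.eq_sub_of_add_eq hsum
  have hcard3 : Multiset.card ((s.filter (fun v => ¬ ∃ i ∈ N, v.1 i ≠ 0)).filter
      (fun v => ¬ ∃ i ∈ M, v.1 i ≠ 0))
      = 2 ^ (2 * m - (M ∪ N).card) := by
    rw [Multiset.filter_filter, mcard _ inferInstance,
      filter_fst_card (fun α => (¬ ∃ i ∈ M, α i ≠ 0) ∧ ¬ ∃ i ∈ N, α i ≠ 0)]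
    have heq : ((univ : Finset (V m)).filter
        (fun α => (¬ ∃ i ∈ M, α i ≠ 0) ∧ ¬ ∃ i ∈ N, α i ≠ 0))
        = ((univ : Finset (V m)).filter (fun α => ¬ ∃ i ∈ M ∪ N, α i ≠ 0)) := by
      apply Finset.filter_congr
      intro α _
      constructor
      · rintro ⟨hM, hN⟩ ⟨i, hi, hα⟩
        rcases Finset.mem_union.1 hi with h | h
        · exact hM ⟨i, h, hα⟩
        · exact hN ⟨i, h, hα⟩
      · intro h
        exact ⟨fun ⟨i, hi, hα⟩ => h ⟨i, Finset.mem_union.2 (Or.inl hi), hα⟩,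
          fun ⟨i, hi, hα⟩ => h ⟨i, Finset.mem_union.2 (Or.inr hi), hα⟩⟩
    rw [heq, filter_forall_card (M ∪ N), ← pow_add]
    congr 1
    generalize hug : (M ∪ N).card = u at hu ⊢
    omega
  calc s.map (fun v => hammingNorm (gcwR (deltaC M ×ˢ deltaC N) v))
      = (s.filter (fun v => ∃ i ∈ N, v.1 i ≠ 0)).map
          (fun v => hammingNorm (gcwR (deltaC M ×ˢ deltaC N) v))
        + (((s.filter (fun v => ¬ ∃ i ∈ N, v.1 i ≠ 0)).filter (fun v => ∃ i ∈ M, v.1 i ≠ 0)).map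
            (fun v => hammingNorm (gcwR (deltaC M ×ˢ deltaC N) v))
          + ((s.filter (fun v => ¬ ∃ i ∈ N, v.1 i ≠ 0)).filter (fun v => ¬ ∃ i ∈ M, v.1 i ≠ 0)).map
            (fun v => hammingNorm (gcwR (deltaC M ×ˢ deltaC N) v))) := by
        conv_lhs => rw [hdec]
        rw [Multiset.map_add, Multiset.map_add]
    _ = _ := by
      rw [← add_assoc]
      congr 1
      congr 1
      · apply Multiset.eq_replicate.2
        refine ⟨by rw [Multiset.card_map, hcard1], ?_⟩
        intro b hb
        obtain ⟨v, hv, rfl⟩ := Multiset.mem_map.1 hb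
        rw [hW v, if_pos (Multiset.of_mem_filter hv)]
      · apply Multiset.eq_replicate.2
        refine ⟨by rw [Multiset.card_map, hcard2], ?_⟩
        intro b hb
        obtain ⟨v, hv, rfl⟩ := Multiset.mem_map.1 hb
        have hP := Multiset.of_mem_filter hv
        have hQ' := Multiset.of_mem_filter (Multiset.mem_of_mem_filter hv)
        rw [hW v, if_neg hQ', if_pos hP]
      · apply Multiset.eq_replicate.2
        refine ⟨by rw [Multiset.card_map, hcard3], ?_⟩
        intro b hb
        obtain ⟨v, hv, rfl⟩ := Multiset.mem_map.1 hb
        have hP := Multiset.of_mem_filter hv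
        have hQ' := Multiset.of_mem_filter (Multiset.mem_of_mem_filter hv)
        rw [hW v, if_neg hQ', if_neg hP]
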